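/- Assume condition (A) holds for Π_h, and let E_h = Π_h ∘ Φ, where Φ is the minimal-norm lifting. Then for every f_h ∈ X_h = T(V_h) one has T(E_h f_h) = f_h, and ‖E_h f_h‖_𝕍 ≤ ‖Π_h‖ · ‖f_h‖_𝕏. -/

import Mathlib

/-- Stability of the discrete harmonic lifting `E_h = Π_h ∘ Φ`, where `Φ` is the
minimal-norm lifting `Φ(T v) = (Id − P)v`, with `P` the orthogonal projection onto `𝕍₀`. -/
theorem discrete_harmonic_lifting_stability
    {V : Type*} [NormedAddCommGroup V] [InnerProductSpace ℝ V] [CompleteSpace V]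
    (V₀ : Submodule ℝ V) [CompleteSpace V₀] [IsClosed (V₀ : Set V)]
    (Vh : Submodule ℝ V)
    -- Condition (A): a bounded projection `Π_h` onto `V_h` preserving `𝕍₀`.
    (Pih : V →L[ℝ] V)
    (hPirange : ∀ u : V, Pih u ∈ Vh)
    (hPiproj : ∀ u ∈ Vh, Pih u = u)
    (hPipres : ∀ u ∈ V₀, Pih u ∈ V₀) :
    ∀ f ∈ Vh.map V₀.mkQ, ∀ v : V, V₀.mkQ v = f →
      V₀.mkQ (Pih (v - (V₀.orthogonalProjectionOnto v : V))) = f ∧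
      ‖Pih (v - (V₀.orthogonalProjectionOnto v : V))‖ ≤ ‖Pih‖ * ‖f‖ := by
  intro f hf v hv
  obtain ⟨u, hu, rfl⟩ := hf
  set w : V := v - (V₀.orthogonalProjectionOnto v : V) with hw
  constructor
  · -- w = u + (w - u), with w - u ∈ V₀
    have hvu : v - u ∈ V₀ := (Submodule.Quotient.eq V₀).mp hv
    have hwu : w - u ∈ V₀ := by
      have : w - u = (v - u) - (V₀.orthogonalProjectionOnto v : V) := by
        simp [hw]; abel
      rw [this]
      exact V₀.sub_mem hvu (V₀.orthogonalProjectionOnto v).2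
    have hPw := hPipres _ hwu
    rw [map_sub, hPiproj u hu] at hPw
    exact (Submodule.Quotient.eq V₀).mpr hPw
  · have h1 : ‖Pih w‖ ≤ ‖Pih‖ * ‖w‖ := Pih.le_opNorm w
    have h2 : ‖w‖ = ‖V₀.mkQ v‖ := by
      rw [show ‖V₀.mkQ v‖ = Metric.infDist v (V₀ : Set V) from
        QuotientAddGroup.norm_mk (S := V₀.toAddSubgroup) v]
      rw [Metric.infDist_eq_iInf]
      rw [hw, ← Submodule.starProjection_apply, Submodule.starProjection_minimal]
      simp [dist_eq_norm]
    rw [← hv]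
    calc ‖Pih w‖ ≤ ‖Pih‖ * ‖w‖ := h1
      _ = ‖Pih‖ * ‖V₀.mkQ v‖ := by rw [h2]
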